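/- Let f_M, f_C : 2^N → ℤ be normalized supermodular functions, with M-convex set B̈_M of f_M and base-polyhedron B̄_C of f_C. Let Φ : ℝ^N → ℝ be symmetric and strictly convex, and suppose z* = x* + y* minimizes Φ over the Minkowski sum B_E = B̈_M + B̄_C, where x* ∈ B̈_M and y* ∈ B̄_C. If y* + ε(χ_i − χ_j) ∈ B̄_C for some i, j ∈ N and ε > 0, then z*_i ≥ z*_j. -/

import Mathlib

open Finset

/-- The M-convex set of an integer-valued supermodular function. -/
def MSet {N : Type*} [Fintype N] (f : Finset N → ℤ) : Set (N → ℤ) :=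
  {x | (∑ i, x i) = f Finset.univ ∧ ∀ X : Finset N, f X ≤ ∑ i ∈ X, x i}

/-- The base-polyhedron of an integer-valued supermodular function. -/
def basePoly {N : Type*} [Fintype N] (f : Finset N → ℤ) : Set (N → ℝ) :=
  {y | (∑ i, y i) = f Finset.univ ∧ ∀ X : Finset N, (f X : ℝ) ≤ ∑ i ∈ X, y i}

/-- The Minkowski sum `B_E = B̈_M + B̄_C` of possible utility vectors for mixed goods. -/
def BE {N : Type*} [Fintype N] (fM fC : Finset N → ℤ) : Set (N → ℝ) :=
  {z | ∃ x ∈ MSet fM, ∃ y ∈ basePoly fC, z = fun i => (x i : ℝ) + y i}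

/-- at a Φ-minimizer `z* = x* + y*` over `B_E`, if some amount of a
divisible good can be transferred from `j` to `i` within `B̄_C`, then `z*_i ≥ z*_j`. -/
theorem stmt_8 {N : Type*} [Fintype N] [DecidableEq N]
    (fM fC : Finset N → ℤ)
    (hM : ∀ X Y : Finset N, fM X + fM Y ≤ fM (X ∪ Y) + fM (X ∩ Y)) (hM0 : fM ∅ = 0)
    (hC : ∀ X Y : Finset N, fC X + fC Y ≤ fC (X ∪ Y) + fC (X ∩ Y)) (hC0 : fC ∅ = 0)
    (Φ : (N → ℝ) → ℝ)
    (hsym : ∀ (σ : Equiv.Perm N) (z : N → ℝ), Φ (z ∘ σ) = Φ z)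
    (hconv : StrictConvexOn ℝ Set.univ Φ)
    (xs : N → ℤ) (ys : N → ℝ) (hxs : xs ∈ MSet fM) (hys : ys ∈ basePoly fC)
    (hmin : ∀ z ∈ BE fM fC, Φ (fun i => (xs i : ℝ) + ys i) ≤ Φ z)
    (i j : N) (ε : ℝ) (hε : 0 < ε)
    (hmem : (fun k => ys k + ε * ((if k = i then (1 : ℝ) else 0) - (if k = j then 1 else 0)))
              ∈ basePoly fC) :
    (xs j : ℝ) + ys j ≤ (xs i : ℝ) + ys i := by
  by_cases hij : i = j
  · subst hij; exact le_refl _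
  by_contra hlt
  push_neg at hlt
  set d : ℝ := ((xs j : ℝ) + ys j) - ((xs i : ℝ) + ys i) with hd
  have hd0 : 0 < d := by simp only [hd]; linarith
  set δ : ℝ := min ε (d / 2) with hδ
  have hδ0 : 0 < δ := lt_min hε (by linarith)
  have hδε : δ ≤ ε := min_le_left _ _
  have hδd : δ ≤ d / 2 := min_le_right _ _
  set y' : N → ℝ := fun k =>
    ys k + δ * ((if k = i then (1 : ℝ) else 0) - (if k = j then 1 else 0)) with hy'def
  have hsumX : ∀ (c : ℝ) (X : Finset N),
      (∑ k ∈ X, (ys k + c * ((if k = i then (1 : ℝ) else 0) - (if k = j then 1 else 0))))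
        = (∑ k ∈ X, ys k)
          + c * ((if i ∈ X then (1 : ℝ) else 0) - (if j ∈ X then 1 else 0)) := by
    intro c X
    rw [Finset.sum_add_distrib]
    congr 1
    rw [← Finset.mul_sum]
    congr 1
    rw [Finset.sum_sub_distrib, Finset.sum_ite_eq' X i (fun _ => (1 : ℝ)),
      Finset.sum_ite_eq' X j (fun _ => (1 : ℝ))]
  obtain ⟨h1, h2⟩ := hys
  obtain ⟨h1', h2'⟩ := hmem
  have hy' : y' ∈ basePoly fC := by
    constructor
    · simp only [hy'def]
      rw [hsumX δ Finset.univ]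
      simp [h1]
    · intro X
      have e2 := h2' X
      rw [hsumX ε X] at e2
      have e0 := h2 X
      simp only [hy'def]
      rw [hsumX δ X]
      split_ifs at e2 ⊢ <;> nlinarith
  set z' : N → ℝ := fun k => (xs k : ℝ) + y' k with hz'def
  have hz' : z' ∈ BE fM fC := ⟨xs, hxs, y', hy', rfl⟩
  have hm := hmin z' hz'
  -- strict convexity argument
  set a : N → ℝ := fun k => (xs k : ℝ) + ys k with ha
  set b : N → ℝ := a ∘ (Equiv.swap i j) with hb
  have hΦb : Φ b = Φ a := hsym _ _
  have hne : a ≠ b := by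
    intro h
    have hbi : b i = a j := by
      simp only [hb, Function.comp_apply, Equiv.swap_apply_left]
    have := congrFun h i
    rw [hbi] at this
    simp only [ha] at this
    linarith
  set t : ℝ := δ / d with ht
  have ht0 : 0 < t := div_pos hδ0 hd0
  have ht1 : t < 1 := by
    rw [ht, div_lt_one hd0]; linarith
  have htd : t * d = δ := by
    rw [ht, div_mul_cancel₀ δ hd0.ne']
  rw [hd] at htd
  have hcomb : z' = (1 - t) • a + t • b := by
    funext k
    simp only [Pi.add_apply, Pi.smul_apply, smul_eq_mul, hz'def, hy'def, ha, hb,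
      Function.comp_apply]
    by_cases hki : k = i
    · subst hki
      rw [Equiv.swap_apply_left]
      rw [if_pos rfl, if_neg hij]
      linear_combination -htd
    · by_cases hkj : k = j
      · subst hkj
        rw [Equiv.swap_apply_right]
        rw [if_neg hki, if_pos rfl]
        linear_combination htd
      · rw [Equiv.swap_apply_of_ne_of_ne hki hkj]
        rw [if_neg hki, if_neg hkj]
        ring
  have hstrict := hconv.2 (Set.mem_univ a) (Set.mem_univ b) hne
      (by linarith : (0:ℝ) < 1 - t) ht0 (by ring)
  rw [← hcomb, hΦb, smul_eq_mul, smul_eq_mul] at hstrict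
  have : Φ z' < Φ a := by nlinarith
  exact absurd hm (not_le.mpr this)
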